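/- arXiv:1810.00553 — 3 statements merged into one kernel-verified Lean document; each statement's English description precedes it below -/
import Mathlib

section
/- Let a_0, a_1, ..., a_t be real numbers, not all zero up to each prefix (interpret terms with zero denominator as zero). Then the sum over τ from 0 to t of a_τ² / ‖(a_0,...,a_τ)‖₂ is at most 2‖(a_0,...,a_t)‖₂. -/
lemma key_step (S b : ℝ) (hS : 0 ≤ S) (hb : 0 ≤ b) :
    b / Real.sqrt (S + b) ≤ 2 * Real.sqrt (S + b) - 2 * Real.sqrt S := by
  rcases eq_or_lt_of_le (by linarith : (0:ℝ) ≤ S + b) with h | h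
  · have hb0 : b = 0 := by linarith [Real.sqrt_nonneg S]
    have hS0 : S = 0 := by linarith
    simp [hb0, hS0]
  · have hs : 0 < Real.sqrt (S + b) := Real.sqrt_pos.2 h
    rw [div_le_iff₀ hs]
    have h1 : Real.sqrt S * Real.sqrt (S + b) ≤ (S + (S + b)) / 2 := by
      nlinarith [Real.sq_sqrt hS, Real.sq_sqrt (by linarith : (0:ℝ) ≤ S + b),
        sq_nonneg (Real.sqrt S - Real.sqrt (S + b))]
    have h2 : Real.sqrt (S + b) * Real.sqrt (S + b) = S + b :=
      Real.mul_self_sqrt (by linarith)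
    nlinarith

/-- Prefix-sum lemma (Lemma 10 of Duchi et al.): summands with zero
denominator are 0 by Lean's convention `x / 0 = 0`. -/
theorem prefix_sum_sqrt_bound (t : ℕ) (a : ℕ → ℝ) :
    ∑ τ ∈ Finset.range (t + 1),
        a τ ^ 2 / Real.sqrt (∑ i ∈ Finset.range (τ + 1), a i ^ 2)
      ≤ 2 * Real.sqrt (∑ i ∈ Finset.range (t + 1), a i ^ 2) := by
  induction t with
  | zero =>
      simp only [zero_add, Finset.sum_range_one]
      have h := key_step 0 (a 0 ^ 2) le_rfl (sq_nonneg _)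
      rw [zero_add, Real.sqrt_zero] at h
      linarith
  | succ n ih =>
      rw [Finset.sum_range_succ]
      have hS : 0 ≤ ∑ i ∈ Finset.range (n + 1), a i ^ 2 :=
        Finset.sum_nonneg fun i _ => sq_nonneg _
      have hkey := key_step (∑ i ∈ Finset.range (n + 1), a i ^ 2) (a (n + 1) ^ 2)
        hS (sq_nonneg _)
      rw [Finset.sum_range_succ (n := n + 1)]
      linarith
end

section
/- Let ρ ∈ (0,1) and let (δ_k) and h_k be as in the exponential moving average scheme: ṽ_0 = δ_0², ṽ_k = ρṽ_{k−1} + (1−ρ)δ_k², v_k = max(ṽ_k, v_{k−1}), h_k = sqrt((k+1)v_k). If δ_k ≠ 0 for all k, then ∑_{k=0}^{K} (k+1)·δ_k²/h_k ≤ sqrt(K+1)/(1−ρ) · ∑_{k=0}^{K} |δ_k|. -/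
/-- Adaptive-term bound for the exponential moving average scheme of
A2Grad-exp. -/
theorem a2grad_exp_sum_bound (ρ : ℝ) (hρ0 : 0 < ρ) (hρ1 : ρ < 1)
    (K : ℕ) (δ vt v h : ℕ → ℝ)
    (hδ : ∀ k, δ k ≠ 0)
    (hvt0 : vt 0 = δ 0 ^ 2)
    (hvt : ∀ k ≥ 1, vt k = ρ * vt (k - 1) + (1 - ρ) * δ k ^ 2)
    (hv0 : v 0 = max (vt 0) 0)
    (hv : ∀ k ≥ 1, v k = max (vt k) (v (k - 1)))
    (hh : ∀ k, h k = Real.sqrt (((k : ℝ) + 1) * v k)) :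
    ∑ k ∈ Finset.range (K + 1), ((k : ℝ) + 1) * δ k ^ 2 / h k
      ≤ Real.sqrt ((K : ℝ) + 1) / (1 - ρ) *
        ∑ k ∈ Finset.range (K + 1), |δ k| := by
  have h1ρ : (0:ℝ) < 1 - ρ := by linarith
  have hvtlb : ∀ k, (1 - ρ) * δ k ^ 2 ≤ vt k ∧ 0 ≤ vt k := by
    intro k
    induction k with
    | zero =>
      refine ⟨?_, ?_⟩
      · rw [hvt0]; nlinarith [sq_nonneg (δ 0)]
      · rw [hvt0]; positivity
    | succ n ih =>
      have hrec := hvt (n+1) (by omega)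
      simp only [Nat.add_sub_cancel] at hrec
      refine ⟨?_, ?_⟩
      · rw [hrec]; nlinarith [ih.2]
      · rw [hrec]; nlinarith [ih.2, sq_nonneg (δ (n+1))]
  have hvlb : ∀ k, (1 - ρ) * δ k ^ 2 ≤ v k := by
    intro k
    cases k with
    | zero => rw [hv0]; exact le_trans (hvtlb 0).1 (le_max_left _ _)
    | succ n =>
      rw [hv (n+1) (by omega)]
      exact le_trans (hvtlb (n+1)).1 (le_max_left _ _)
  rw [Finset.mul_sum]
  apply Finset.sum_le_sum
  intro k hk
  have hkK : (k:ℝ) ≤ K := by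
    exact_mod_cast Nat.lt_succ_iff.mp (Finset.mem_range.mp hk)
  set d := |δ k| with hd
  have hdpos : 0 < d := abs_pos.mpr (hδ k)
  have hδ2 : δ k ^ 2 = d ^ 2 := (sq_abs _).symm
  have hc : Real.sqrt (((k:ℝ)+1) * (1-ρ)) * d ≤ h k := by
    rw [hh k]
    have hmul : ((k:ℝ)+1) * ((1-ρ) * δ k ^ 2) ≤ ((k:ℝ)+1) * v k :=
      mul_le_mul_of_nonneg_left (hvlb k) (by positivity)
    calc Real.sqrt (((k:ℝ)+1) * (1-ρ)) * d
        = Real.sqrt (((k:ℝ)+1) * ((1-ρ) * δ k ^ 2)) := by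
          rw [hδ2, show ((k:ℝ)+1) * ((1-ρ) * d^2) = (((k:ℝ)+1)*(1-ρ)) * d^2 by ring,
              Real.sqrt_mul (by positivity : (0:ℝ) ≤ ((k:ℝ)+1)*(1-ρ)) (d^2),
              Real.sqrt_sq hdpos.le]
      _ ≤ _ := Real.sqrt_le_sqrt hmul
  have hcpos : 0 < Real.sqrt (((k:ℝ)+1)*(1-ρ)) * d := by positivity
  have hhpos : 0 < h k := lt_of_lt_of_le hcpos hc
  have step1 : ((k:ℝ)+1) * δ k ^ 2 / h k
      ≤ ((k:ℝ)+1) * δ k ^ 2 / (Real.sqrt (((k:ℝ)+1)*(1-ρ)) * d) :=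
    div_le_div_of_nonneg_left (by positivity) hcpos hc
  refine step1.trans ?_
  rw [div_le_iff₀ hcpos]
  have hs : Real.sqrt (((k:ℝ)+1)*(1-ρ)) = Real.sqrt ((k:ℝ)+1) * Real.sqrt (1-ρ) :=
    Real.sqrt_mul (by positivity) _
  set s := Real.sqrt ((k:ℝ)+1) with hsdef
  set t := Real.sqrt ((K:ℝ)+1) with htdef
  set u := Real.sqrt (1-ρ) with hudef
  have hs2 : s^2 = (k:ℝ)+1 := Real.sq_sqrt (by positivity)
  have hu2 : u^2 = 1-ρ := Real.sq_sqrt h1ρ.le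
  have hst : s ≤ t := Real.sqrt_le_sqrt (by linarith)
  have hupos : 0 < u := Real.sqrt_pos.mpr h1ρ
  have hspos : 0 < s := Real.sqrt_pos.mpr (by positivity)
  have hu1 : u ≤ 1 := by nlinarith
  have hsu : s * u ≤ t := by nlinarith
  rw [hs, hδ2, ← hu2, ← hs2]
  rw [div_mul_eq_mul_div, div_mul_eq_mul_div, le_div_iff₀ (by positivity)]
  nlinarith [mul_le_mul_of_nonneg_right hsu (show (0:ℝ) ≤ s*u*d^2 by positivity)]
end

section
/- Let ψ and φ be differentiable convex functions on a closed convex set X ⊆ ℝ^d with Bregman divergences D_ψ and D_φ, let α, β > 0, g ∈ ℝ^d, y₁, y₂ ∈ X, and let z be a minimizer over X of F(x) = ⟨g, x⟩ + α·D_φ(y₁, x) + β·D_ψ(y₂, x). Then for all x ∈ X: ⟨g, z⟩ + α·D_φ(y₁, z) + β·D_ψ(y₂, z) ≤ ⟨g, x⟩ + α·D_φ(y₁, x) + β·D_ψ(y₂, x) − α·D_φ(z, x) − β·D_ψ(z, x). -/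
open RealInnerProductSpace Set Filter Topology

/-- Three-point lemma for a mirror-descent step with two Bregman terms. -/
theorem three_point_lemma {d : ℕ}
    (X : Set (EuclideanSpace ℝ (Fin d))) (hXc : IsClosed X) (hXconv : Convex ℝ X)
    (ψ φ : EuclideanSpace ℝ (Fin d) → ℝ)
    (gψ gφ : EuclideanSpace ℝ (Fin d) → EuclideanSpace ℝ (Fin d))
    (hψconv : ConvexOn ℝ X ψ) (hφconv : ConvexOn ℝ X φ)
    (hψgrad : ∀ x, HasGradientAt ψ (gψ x) x)
    (hφgrad : ∀ x, HasGradientAt φ (gφ x) x)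
    (Dψ Dφ : EuclideanSpace ℝ (Fin d) → EuclideanSpace ℝ (Fin d) → ℝ)
    (hDψ : ∀ y x, Dψ y x = ψ x - ψ y - ⟪gψ y, x - y⟫)
    (hDφ : ∀ y x, Dφ y x = φ x - φ y - ⟪gφ y, x - y⟫)
    (α β : ℝ) (hα : 0 < α) (hβ : 0 < β)
    (g y₁ y₂ z : EuclideanSpace ℝ (Fin d))
    (hy₁ : y₁ ∈ X) (hy₂ : y₂ ∈ X) (hz : z ∈ X)
    (hmin : ∀ x ∈ X,
      ⟪g, z⟫ + α * Dφ y₁ z + β * Dψ y₂ z ≤ ⟪g, x⟫ + α * Dφ y₁ x + β * Dψ y₂ x) :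
    ∀ x ∈ X,
      ⟪g, z⟫ + α * Dφ y₁ z + β * Dψ y₂ z
        ≤ ⟪g, x⟫ + α * Dφ y₁ x + β * Dψ y₂ x - α * Dφ z x - β * Dψ z x := by
  intro x hx
  set c : ℝ → EuclideanSpace ℝ (Fin d) := fun t => z + t • (x - z) with hc
  have hcX : ∀ t ∈ Icc (0:ℝ) 1, c t ∈ X := by
    intro t ht
    have := hXconv hz hx (by linarith [ht.2] : (0:ℝ) ≤ 1 - t) ht.1 (by ring)
    convert this using 1
    simp only [hc]
    module
  have hcd : ∀ t : ℝ, HasDerivAt c (x - z) t := by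
    intro t
    simpa [hc] using ((hasDerivAt_id t).smul_const (x - z)).const_add z
  -- derivative of F ∘ c at 0
  set K : ℝ := ⟪g, x - z⟫ + α * (⟪gφ z, x - z⟫ - ⟪gφ y₁, x - z⟫)
      + β * (⟪gψ z, x - z⟫ - ⟪gψ y₂, x - z⟫) with hK
  set q : ℝ → ℝ := fun t => ⟪g, c t⟫ + α * Dφ y₁ (c t) + β * Dψ y₂ (c t) with hq
  have hphi : HasDerivAt (fun t => φ (c t)) ⟪gφ z, x - z⟫ 0 := by
    have := (hφgrad (c 0)).hasFDerivAt.comp_hasDerivAt 0 (hcd 0)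
    simp [hc] at this; exact this
  have hpsi : HasDerivAt (fun t => ψ (c t)) ⟪gψ z, x - z⟫ 0 := by
    have := (hψgrad (c 0)).hasFDerivAt.comp_hasDerivAt 0 (hcd 0)
    simp [hc] at this; exact this
  have hinner : ∀ v : EuclideanSpace ℝ (Fin d),
      HasDerivAt (fun t => ⟪v, c t⟫) ⟪v, x - z⟫ 0 := by
    intro v
    have := (hasDerivAt_const (0:ℝ) v).inner ℝ (hcd 0)
    simpa using this
  have hqd : HasDerivAt q K 0 := by
    have h1 : HasDerivAt (fun t => ⟪g, c t⟫ + α * (φ (c t) - φ y₁ - (⟪gφ y₁, c t⟫ - ⟪gφ y₁, y₁⟫))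
        + β * (ψ (c t) - ψ y₂ - (⟪gψ y₂, c t⟫ - ⟪gψ y₂, y₂⟫))) K 0 := by
      have := ((hinner g).add
        ((((hphi.sub_const (φ y₁)).sub ((hinner (gφ y₁)).sub_const ⟪gφ y₁, y₁⟫)).const_mul α))).add
        ((((hpsi.sub_const (ψ y₂)).sub ((hinner (gψ y₂)).sub_const ⟪gψ y₂, y₂⟫)).const_mul β))
      convert this using 1
      all_goals rfl
    convert h1 using 2 with t
    rw [hq]
    simp only [hDφ, hDψ, inner_sub_right]
  have hKnn : 0 ≤ K := by
    have hslope : Tendsto (slope q 0) (𝓝[>] 0) (𝓝 K) :=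
      ((hasDerivAt_iff_tendsto_slope.mp hqd).mono_left
        (nhdsWithin_mono _ (fun t ht => ne_of_gt ht)))
    refine ge_of_tendsto hslope ?_
    filter_upwards [Ioo_mem_nhdsGT_of_mem (by norm_num : (0:ℝ) ∈ Ico (0:ℝ) 1)] with t ht
    have hqt : q 0 ≤ q t := by
      have h0 : c 0 = z := by simp [hc]
      have := hmin (c t) (hcX t ⟨le_of_lt ht.1, le_of_lt ht.2⟩)
      simpa [hq, h0] using this
    have : (0:ℝ) < t := ht.1
    rw [slope_def_field, sub_zero]
    exact div_nonneg (sub_nonneg.mpr hqt) ht.1.le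
  have hK' := hKnn
  rw [hK] at hK'
  simp only [hDφ, hDψ, inner_sub_right] at hK' ⊢
  linarith
end
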